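/- Let q, m, n be positive integers with gcd(mn, q) = 1. Then ∑⁺_{χ mod q} χ(m)·conj(χ)(n) = (1/2)·( ∑_{d ∣ gcd(q, m−n)} φ(d) μ(q/d) + ∑_{d ∣ gcd(q, m+n)} φ(d) μ(q/d) ), where gcd(q, 0) is understood to be q. -/

import Mathlib

open Complex DirichletCharacter

lemma aux_factorsThrough_gcd {R : Type*} [CommMonoidWithZero R] {N : ℕ} [NeZero N]
    {χ : DirichletCharacter R N} {a b : ℕ} (ha : χ.FactorsThrough a) (hb : χ.FactorsThrough b) :
    χ.FactorsThrough (Nat.gcd a b) := by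
  have hgd : Nat.gcd a b ∣ N := (Nat.gcd_dvd_left a b).trans ha.dvd
  rw [factorsThrough_iff_ker_unitsMap hgd]
  intro x hx
  set g : ℕ := Nat.gcd a b with hgdef
  set X : ℕ := ((x : ZMod N)).val with hXdef
  have hXx : ((X : ZMod N)) = (x : ZMod N) := by rw [ZMod.natCast_val, ZMod.cast_id]
  -- g ∣ X - 1
  have h1 : ((X : ZMod g)) = 1 := by
    have h := congrArg (Units.val) hx
    rw [ZMod.unitsMap_def] at h
    simp only [Units.coe_map, MonoidHom.coe_coe, Units.val_one] at h
    rw [ZMod.castHom_apply] at h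
    rw [ZMod.natCast_val]
    exact h
  have hg1 : ((g : ℤ)) ∣ (X : ℤ) - 1 := by
    have : (((X : ℤ) - 1 : ℤ) : ZMod g) = 0 := by
      push_cast
      rw [h1, sub_self]
    exact (ZMod.intCast_zmod_eq_zero_iff_dvd _ _).mp this
  obtain ⟨s, hs⟩ := hg1
  set A : ℤ := Int.gcdA a b with hAdef
  set B : ℤ := Int.gcdB a b with hBdef
  have hBez : (g : ℤ) = a * A + b * B := by
    rw [hgdef, ← Int.gcd_natCast_natCast]
    exact Int.gcd_eq_gcd_ab _ _
  set Z : ℤ := 1 + (a : ℤ) * (A * s) with hZdef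
  have hZa : (a : ℤ) ∣ Z - 1 := ⟨A * s, by rw [hZdef]; ring⟩
  have hZX : (b : ℤ) ∣ Z - X := ⟨-(B * s), by rw [hZdef]; linear_combination -hs - s * hBez⟩
  -- Z is coprime to lcm a b
  have hcopa : IsCoprime (a : ℤ) Z := by
    have := (isCoprime_one_right (x := (a : ℤ))).add_mul_left_right (A * s)
    rwa [hZdef]
  have hcopb : IsCoprime (b : ℤ) Z := by
    have hXN : Nat.Coprime X N := ZMod.val_coe_unit_coprime x
    have hXb : IsCoprime (b : ℤ) (X : ℤ) :=
      (Nat.isCoprime_iff_coprime.mpr ((hXN.coprime_dvd_right hb.dvd))).symm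
    obtain ⟨w, hw⟩ := hZX
    have := hXb.add_mul_left_right w
    rwa [← hw, add_sub_cancel] at this
  have hcopl : IsCoprime ((Nat.lcm a b : ℕ) : ℤ) Z := by
    have hab : IsCoprime ((a * b : ℕ) : ℤ) Z := by push_cast; exact hcopa.mul_left hcopb
    exact hab.of_isCoprime_of_dvd_left (Int.natCast_dvd_natCast.mpr (Nat.lcm_dvd_mul a b))
  set l : ℕ := Nat.lcm a b with hldef
  have hZl : IsUnit ((Z : ZMod l)) := by
    obtain ⟨u, v, huv⟩ := hcopl
    have h2 := congrArg (fun t : ℤ => ((t : ZMod l))) huv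
    push_cast at h2
    rw [ZMod.natCast_self, mul_zero, zero_add] at h2
    exact IsUnit.of_mul_eq_one _ (by rw [mul_comm] at h2; exact h2)
  have hlN : l ∣ N := Nat.lcm_dvd ha.dvd hb.dvd
  obtain ⟨y, hy⟩ := ZMod.unitsMap_surjective hlN hZl.unit
  -- values of y
  have hyval : ZMod.castHom hlN (ZMod l) (y : ZMod N) = (Z : ZMod l) := by
    have h3 := congrArg (Units.val) hy
    rw [ZMod.unitsMap_def] at h3
    simp only [Units.coe_map, MonoidHom.coe_coe] at h3
    rw [h3, IsUnit.unit_spec]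
  have hval : ∀ (c : ℕ) (hc : c ∣ l), ZMod.castHom (hc.trans hlN) (ZMod c) (y : ZMod N)
      = ((Z : ℤ) : ZMod c) := by
    intro c hc
    rw [← ZMod.castHom_comp hc hlN, RingHom.comp_apply, hyval, map_intCast]
  have hkera := (factorsThrough_iff_ker_unitsMap (R := R) ha.dvd).mp ha
  have hkerb := (factorsThrough_iff_ker_unitsMap (R := R) hb.dvd).mp hb
  have hya : ZMod.unitsMap ha.dvd y = 1 := by
    apply Units.ext
    rw [ZMod.unitsMap_def]
    simp only [Units.coe_map, MonoidHom.coe_coe, Units.val_one]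
    have := hval a (Nat.dvd_lcm_left a b)
    rw [this]
    have : (((Z - 1 : ℤ)) : ZMod a) = 0 := (ZMod.intCast_zmod_eq_zero_iff_dvd _ _).mpr hZa
    push_cast at this
    linear_combination this
  have hyb : ZMod.unitsMap hb.dvd y = ZMod.unitsMap hb.dvd x := by
    apply Units.ext
    rw [ZMod.unitsMap_def]
    simp only [Units.coe_map, MonoidHom.coe_coe]
    have h4 := hval b (Nat.dvd_lcm_right a b)
    rw [h4]
    have h5 : (((Z - X : ℤ)) : ZMod b) = 0 := (ZMod.intCast_zmod_eq_zero_iff_dvd _ _).mpr hZX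
    have h6 : ZMod.castHom hb.dvd (ZMod b) (x : ZMod N) = ((X : ℕ) : ZMod b) := by
      rw [ZMod.castHom_apply, ← ZMod.natCast_val]
    rw [h6]
    push_cast at h5
    linear_combination h5
  -- conclude
  have hxy : χ.toUnitHom y = 1 := hkera (by rw [MonoidHom.mem_ker]; exact hya)
  have hxyx : χ.toUnitHom (y⁻¹ * x) = 1 := by
    apply hkerb
    rw [MonoidHom.mem_ker, map_mul, map_inv, hyb, inv_mul_cancel]
  rw [MonoidHom.mem_ker]
  calc χ.toUnitHom x = χ.toUnitHom (y * (y⁻¹ * x)) := by rw [mul_inv_cancel_left]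
    _ = χ.toUnitHom y * χ.toUnitHom (y⁻¹ * x) := map_mul _ _ _
    _ = 1 := by rw [hxy, hxyx, mul_one]

lemma aux_conductor_dvd_of_factorsThrough {R : Type*} [CommMonoidWithZero R] {N : ℕ} [NeZero N]
    {χ : DirichletCharacter R N} {d : ℕ} (h : χ.FactorsThrough d) : χ.conductor ∣ d := by
  have hg := aux_factorsThrough_gcd (factorsThrough_conductor χ) h
  have h1 : χ.conductor ≤ Nat.gcd χ.conductor d := Nat.sInf_le hg
  have h2 : Nat.gcd χ.conductor d ∣ χ.conductor := Nat.gcd_dvd_left _ _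
  have h0 : χ.conductor ≠ 0 := conductor_ne_zero χ
  have heq : Nat.gcd χ.conductor d = χ.conductor :=
    Nat.le_antisymm (Nat.le_of_dvd (Nat.pos_of_ne_zero h0) h2) h1
  exact heq ▸ Nat.gcd_dvd_right _ _

lemma aux_conductor_changeLevel {R : Type*} [CommMonoidWithZero R] {d N : ℕ} [NeZero N]
    (h : d ∣ N) (χ : DirichletCharacter R d) :
    (changeLevel h χ).conductor = χ.conductor := by
  haveI : NeZero d := ⟨fun h0 => NeZero.ne N (Nat.eq_zero_of_zero_dvd (h0 ▸ h))⟩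
  set ψ := changeLevel h χ with hψ
  have hft := factorsThrough_conductor χ
  have h1 : ψ.FactorsThrough χ.conductor := by
    refine ⟨(conductor_dvd_level χ).trans h, hft.χ₀, ?_⟩
    rw [hψ]
    conv_lhs => rw [hft.eq_changeLevel]
    rw [← changeLevel_trans]
  have hd1 : ψ.conductor ∣ χ.conductor := aux_conductor_dvd_of_factorsThrough h1
  have hft2 := factorsThrough_conductor ψ
  have hcd : ψ.conductor ∣ d := hd1.trans (conductor_dvd_level χ)
  have h2 : χ.FactorsThrough ψ.conductor := by
    refine ⟨hcd, hft2.χ₀, ?_⟩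
    apply changeLevel_injective h
    rw [← hψ, ← changeLevel_trans]
    exact hft2.eq_changeLevel
  exact Nat.dvd_antisymm hd1 (aux_conductor_dvd_of_factorsThrough h2)

noncomputable def Ffun (m n e : ℕ) (χ : DirichletCharacter ℂ e) : ℂ :=
  (χ (m : ZMod e) * (starRingEnd ℂ) (χ (n : ZMod e))
    + χ (-(m : ZMod e)) * (starRingEnd ℂ) (χ (n : ZMod e))) / 2

noncomputable instance {d : ℕ} (χ : DirichletCharacter ℂ d) : Decidable χ.IsPrimitive :=
  decidable_of_iff _ (isPrimitive_def χ).symm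

noncomputable def gfun (m n d : ℕ) : ℂ :=
  ∑ χ : DirichletCharacter ℂ d, if χ.IsPrimitive then Ffun m n d χ else 0

lemma changeLevel_natCast {d e : ℕ} [NeZero e] (hd : d ∣ e) (χ : DirichletCharacter ℂ d)
    (k : ℕ) (hk : Nat.Coprime k e) :
    (changeLevel hd χ) (k : ZMod e) = χ (k : ZMod d) := by
  have hu : IsUnit ((k : ZMod e)) := (ZMod.isUnit_iff_coprime k e).mpr hk
  have h1 := changeLevel_eq_cast_of_dvd χ hd hu.unit
  rw [IsUnit.unit_spec] at h1
  rw [h1, ZMod.cast_natCast hd]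

lemma changeLevel_neg_natCast {d e : ℕ} [NeZero e] (hd : d ∣ e) (χ : DirichletCharacter ℂ d)
    (k : ℕ) (hk : Nat.Coprime k e) :
    (changeLevel hd χ) (-(k : ZMod e)) = χ (-(k : ZMod d)) := by
  have hu : IsUnit (-(k : ZMod e)) := ((ZMod.isUnit_iff_coprime k e).mpr hk).neg
  have h1 := changeLevel_eq_cast_of_dvd χ hd hu.unit
  rw [IsUnit.unit_spec] at h1
  rw [h1]
  congr 1
  rw [← ZMod.castHom_apply (h := hd), map_neg, ZMod.castHom_apply, ZMod.cast_natCast hd]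

lemma Ffun_changeLevel {q m n d e : ℕ} [NeZero e] (hm : Nat.Coprime m q) (hn : Nat.Coprime n q)
    (hd : d ∣ e) (he : e ∣ q) (χ : DirichletCharacter ℂ d) :
    Ffun m n e (changeLevel hd χ) = Ffun m n d χ := by
  unfold Ffun
  rw [changeLevel_natCast hd χ m (hm.coprime_dvd_right he),
      changeLevel_natCast hd χ n (hn.coprime_dvd_right he),
      changeLevel_neg_natCast hd χ m (hm.coprime_dvd_right he)]

lemma T_decomp {q m n : ℕ} [NeZero q] (hm : Nat.Coprime m q) (hn : Nat.Coprime n q)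
    {e : ℕ} (he : e ∣ q) :
    ∑ χ : DirichletCharacter ℂ e, Ffun m n e χ = ∑ d ∈ e.divisors, gfun m n d := by
  haveI : NeZero e := ⟨fun h0 => NeZero.ne q (Nat.eq_zero_of_zero_dvd (h0 ▸ he))⟩
  have hstep : ∀ d ∈ e.divisors,
      gfun m n d = ∑ χ ∈ Finset.univ.filter (fun χ : DirichletCharacter ℂ e =>
        χ.conductor = d), Ffun m n e χ := by
    intro d hd
    obtain ⟨hde, -⟩ := Nat.mem_divisors.mp hd
    rw [gfun, ← Finset.sum_filter]
    refine Finset.sum_bij (fun χ₀ _ => changeLevel hde χ₀) ?_ ?_ ?_ ?_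
    · intro χ₀ hχ₀
      rw [Finset.mem_filter] at hχ₀ ⊢
      exact ⟨Finset.mem_univ _, by rw [aux_conductor_changeLevel hde χ₀]; exact hχ₀.2⟩
    · intro χ₁ h1 χ₂ h2 hEq
      exact changeLevel_injective hde hEq
    · intro χ hχ
      rw [Finset.mem_filter] at hχ
      have hft : χ.FactorsThrough d := hχ.2 ▸ factorsThrough_conductor χ
      refine ⟨hft.χ₀, ?_, hft.eq_changeLevel.symm⟩
      rw [Finset.mem_filter]
      refine ⟨Finset.mem_univ _, ?_⟩
      have : (changeLevel hft.dvd hft.χ₀).conductor = hft.χ₀.conductor :=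
        aux_conductor_changeLevel _ _
      rw [← hft.eq_changeLevel, hχ.2] at this
      exact this.symm
    · intro χ₀ hχ₀
      exact (Ffun_changeLevel hm hn hde he χ₀).symm
  rw [Finset.sum_congr rfl hstep]
  exact (Finset.sum_fiberwise_of_maps_to (fun χ _ => Nat.mem_divisors.mpr
    ⟨conductor_dvd_level χ, NeZero.ne e⟩) _).symm

lemma T_eval {m n e : ℕ} [NeZero e] (hm : Nat.Coprime m e) (hn : Nat.Coprime n e) :
    ∑ χ : DirichletCharacter ℂ e, Ffun m n e χ =
      (1/2 : ℂ) * ((if ((m : ZMod e)) = (n : ZMod e) then (e.totient : ℂ) else 0)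
        + (if ((m : ZMod e)) = -(n : ZMod e) then (e.totient : ℂ) else 0)) := by
  have hun : IsUnit ((n : ZMod e)) := (ZMod.isUnit_iff_coprime n e).mpr hn
  have hconj : ∀ χ : DirichletCharacter ℂ e,
      (starRingEnd ℂ) (χ (n : ZMod e)) = χ ((n : ZMod e)⁻¹) := by
    intro χ
    have hmul : χ ((n : ZMod e)⁻¹) * χ ((n : ZMod e)) = 1 := by
      rw [← map_mul, ZMod.inv_mul_of_unit _ hun, map_one]
    have hnorm : ‖χ ((n : ZMod e))‖ = 1 := by
      have := χ.unit_norm_eq_one hun.unit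
      rwa [IsUnit.unit_spec] at this
    rw [← Complex.inv_eq_conj hnorm]
    exact (eq_inv_of_mul_eq_one_left hmul).symm
  have hsplit : ∀ χ : DirichletCharacter ℂ e, Ffun m n e χ =
      χ ((n : ZMod e))⁻¹ * χ ((m : ZMod e)) / 2
        + χ ((n : ZMod e))⁻¹ * χ (-(m : ZMod e)) / 2 := by
    intro χ
    rw [Ffun, hconj]
    ring
  rw [Finset.sum_congr rfl fun χ _ => hsplit χ, Finset.sum_add_distrib, ← Finset.sum_div,
    ← Finset.sum_div, sum_char_inv_mul_char_eq ℂ hun ((m : ZMod e)),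
    sum_char_inv_mul_char_eq ℂ hun (-(m : ZMod e))]
  have hiff1 : ((n : ZMod e) = (m : ZMod e)) ↔ ((m : ZMod e) = (n : ZMod e)) := eq_comm
  have hiff2 : ((n : ZMod e) = -(m : ZMod e)) ↔ ((m : ZMod e) = -(n : ZMod e)) :=
    ⟨fun h => by rw [h, neg_neg], fun h => by rw [h, neg_neg]⟩
  rw [if_congr hiff1 rfl rfl, if_congr hiff2 rfl rfl]
  ring

lemma g_moebius {q m n : ℕ} [NeZero q] (hm : Nat.Coprime m q) (hn : Nat.Coprime n q) :
    gfun m n q = ∑ d ∈ q.divisors, (ArithmeticFunction.moebius (q/d) : ℂ) *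
      ∑ χ : DirichletCharacter ℂ d, Ffun m n d χ := by
  have key := (ArithmeticFunction.sum_eq_iff_sum_smul_moebius_eq_on
      (f := fun d => gfun m n d)
      (g := fun e => ∑ χ : DirichletCharacter ℂ e, Ffun m n e χ)
      {e | e ∣ q} (fun a b hab hb => hab.trans hb)).mp
    (fun e _ he => (T_decomp hm hn he).symm) q (Nat.pos_of_ne_zero (NeZero.ne q)) (dvd_refl q)
  rw [Nat.sum_divisorsAntidiagonal'
    (f := fun a b => (ArithmeticFunction.moebius a : ℤ) •
      ∑ χ : DirichletCharacter ℂ b, Ffun m n b χ)] at key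
  rw [← key]
  refine Finset.sum_congr rfl fun d _ => ?_
  rw [zsmul_eq_mul]

noncomputable instance {d : ℕ} (χ : DirichletCharacter ℂ d) : Decidable χ.Even :=
  Classical.dec _


lemma nat_dvd_int_gcd_iff {d : ℕ} {a b : ℤ} :
    d ∣ Int.gcd a b ↔ ((d : ℤ) ∣ a ∧ (d : ℤ) ∣ b) := by
  rw [Int.gcd, Nat.dvd_gcd_iff, Int.natCast_dvd, Int.natCast_dvd]

/-- Orthogonality for primitive even Dirichlet characters mod `q`:
for `gcd(mn, q) = 1`,
`∑⁺_χ χ(m) conj(χ)(n) = (1/2)(∑_{d ∣ (q, m−n)} φ(d)μ(q/d) + ∑_{d ∣ (q, m+n)} φ(d)μ(q/d))`. -/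
theorem orthogonality_even_primitive (q m n : ℕ) [NeZero q] (hm : 0 < m) (hn : 0 < n)
    (h : Nat.Coprime (m * n) q) :
    ∑ᶠ (χ : DirichletCharacter ℂ q) (_ : χ.IsPrimitive ∧ χ.Even),
        χ (m : ZMod q) * (starRingEnd ℂ) (χ (n : ZMod q)) =
      (1 / 2 : ℂ) *
        ((∑ d ∈ (Int.gcd (q : ℤ) ((m : ℤ) - (n : ℤ))).divisors,
            (Nat.totient d : ℂ) * (ArithmeticFunction.moebius (q / d) : ℂ)) +
          (∑ d ∈ (Nat.gcd q (m + n)).divisors,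
            (Nat.totient d : ℂ) * (ArithmeticFunction.moebius (q / d) : ℂ))) := by
  have hmq : Nat.Coprime m q := Nat.Coprime.coprime_dvd_left (dvd_mul_right m n) h
  have hnq : Nat.Coprime n q := Nat.Coprime.coprime_dvd_left (dvd_mul_left n m) h
  -- Step 1 : finsum to finset sum
  have h1 : ∑ᶠ (χ : DirichletCharacter ℂ q) (_ : χ.IsPrimitive ∧ χ.Even),
      χ (m : ZMod q) * (starRingEnd ℂ) (χ (n : ZMod q))
      = ∑ χ ∈ Finset.univ.filter (fun χ : DirichletCharacter ℂ q => χ.IsPrimitive ∧ χ.Even),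
          χ (m : ZMod q) * (starRingEnd ℂ) (χ (n : ZMod q)) :=
    finsum_cond_eq_sum_of_cond_iff _ (fun {χ} _ => by simp)
  rw [h1, Finset.sum_filter]
  -- Step 2 : even/odd split into Ffun
  have h2 : ∀ χ : DirichletCharacter ℂ q,
      (if χ.IsPrimitive ∧ χ.Even then χ (m : ZMod q) * (starRingEnd ℂ) (χ (n : ZMod q)) else 0)
      = (if χ.IsPrimitive then Ffun m n q χ else 0) := by
    intro χ
    by_cases hP : χ.IsPrimitive
    · rcases χ.even_or_odd with hE | hO
      · rw [if_pos ⟨hP, hE⟩, if_pos hP, Ffun, hE.eval_neg]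
        ring
      · rw [if_neg (fun hc => DirichletCharacter.Odd.not_even χ hO hc.2), if_pos hP, Ffun, hO.eval_neg]
        ring
    · rw [if_neg (fun hc => hP hc.1), if_neg hP]
  rw [Finset.sum_congr rfl (fun χ _ => h2 χ)]
  have hgq : (∑ χ : DirichletCharacter ℂ q, if χ.IsPrimitive then Ffun m n q χ else 0)
      = gfun m n q := rfl
  rw [hgq, g_moebius hmq hnq]
  -- Step 3 : evaluate the inner sums
  have h3 : ∀ d ∈ q.divisors,
      (ArithmeticFunction.moebius (q/d) : ℂ) * ∑ χ : DirichletCharacter ℂ d, Ffun m n d χ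
      = (1/2 : ℂ) * ((if ((m : ZMod d)) = (n : ZMod d)
            then (Nat.totient d : ℂ) * (ArithmeticFunction.moebius (q/d) : ℂ) else 0)
        + (if ((m : ZMod d)) = -(n : ZMod d)
            then (Nat.totient d : ℂ) * (ArithmeticFunction.moebius (q/d) : ℂ) else 0)) := by
    intro d hd
    haveI : NeZero d := ⟨(Nat.pos_of_mem_divisors hd).ne'⟩
    rw [T_eval (hmq.coprime_dvd_right (Nat.dvd_of_mem_divisors hd))
      (hnq.coprime_dvd_right (Nat.dvd_of_mem_divisors hd))]
    split_ifs <;> ring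
  rw [Finset.sum_congr rfl h3, ← Finset.mul_sum, Finset.sum_add_distrib]
  congr 1
  congr 1
  -- Sum 1
  · rw [← Finset.sum_filter]
    apply Finset.sum_congr _ (fun _ _ => rfl)
    ext d
    simp only [Finset.mem_filter, Nat.mem_divisors]
    have hcond : ∀ (hd0 : d ≠ 0), (((m : ZMod d)) = (n : ZMod d)) ↔ (d : ℤ) ∣ ((m : ℤ) - n) := by
      intro hd0
      haveI : NeZero d := ⟨hd0⟩
      rw [← ZMod.intCast_zmod_eq_zero_iff_dvd]
      push_cast
      rw [sub_eq_zero]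
    constructor
    · rintro ⟨⟨hdq, hq0⟩, hc⟩
      refine ⟨nat_dvd_int_gcd_iff.mpr ⟨Int.natCast_dvd_natCast.mpr hdq, ?_⟩, ?_⟩
      · exact (hcond (by rintro rfl; exact hq0 (Nat.eq_zero_of_zero_dvd hdq)) |>.mp hc)
      · intro hg
        rw [Int.gcd_eq_zero_iff] at hg
        exact (NeZero.ne q) (by exact_mod_cast hg.1)
    · rintro ⟨hdg, hg0⟩
      obtain ⟨hdq, hdmn⟩ := nat_dvd_int_gcd_iff.mp hdg
      have hdq' : d ∣ q := Int.natCast_dvd_natCast.mp hdq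
      have hd0 : d ≠ 0 := by
        rintro rfl
        exact hg0 (Nat.eq_zero_of_zero_dvd hdg)
      exact ⟨⟨hdq', NeZero.ne q⟩, (hcond hd0).mpr hdmn⟩
  -- Sum 2
  · rw [← Finset.sum_filter]
    apply Finset.sum_congr _ (fun _ _ => rfl)
    ext d
    simp only [Finset.mem_filter, Nat.mem_divisors]
    have hcond : ∀ (hd0 : d ≠ 0), (((m : ZMod d)) = -(n : ZMod d)) ↔ d ∣ (m + n) := by
      intro hd0
      rw [← ZMod.natCast_eq_zero_iff]
      push_cast
      rw [eq_neg_iff_add_eq_zero]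
    constructor
    · rintro ⟨⟨hdq, hq0⟩, hc⟩
      have hd0 : d ≠ 0 := by rintro rfl; exact hq0 (Nat.eq_zero_of_zero_dvd hdq)
      refine ⟨Nat.dvd_gcd hdq ((hcond hd0).mp hc), fun hg => ?_⟩
      exact (NeZero.ne q) (Nat.eq_zero_of_gcd_eq_zero_left hg)
    · rintro ⟨hdg, hg0⟩
      have hdq : d ∣ q := hdg.trans (Nat.gcd_dvd_left _ _)
      have hd0 : d ≠ 0 := by rintro rfl; exact hg0 (Nat.eq_zero_of_zero_dvd hdg)
      exact ⟨⟨hdq, NeZero.ne q⟩, (hcond hd0).mpr (hdg.trans (Nat.gcd_dvd_right _ _))⟩
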